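/- Let X be a closed linear subspace of a real Banach space Y, and suppose X* does not embed linearly isometrically into Y*. Define F(f) = {g ∈ Y* : g|_X = f and ‖g‖ = ‖f‖} for f ∈ X*. Then F admits no local affine selection at 0: there is no open neighbourhood U of 0 in X* and affine map φ : X* → Y* with φ(f) ∈ F(f) for all f ∈ U. -/

import Mathlib

open NormedSpace

theorem stmt_11 {Y : Type*} [NormedAddCommGroup Y] [NormedSpace ℝ Y]
    [CompleteSpace Y] (X : Subspace ℝ Y) (hX : IsClosed (X : Set Y))
    (hemb : ¬ ∃ T : StrongDual ℝ X →ₗ[ℝ] StrongDual ℝ Y, ∀ f, ‖T f‖ = ‖f‖)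
    (F : StrongDual ℝ X → Set (StrongDual ℝ Y))
    (hF : ∀ f, F f = {g : StrongDual ℝ Y | (∀ x : X, g x = f x) ∧ ‖g‖ = ‖f‖}) :
    ¬ ∃ (U : Set (StrongDual ℝ X)) (φ : StrongDual ℝ X →ᵃ[ℝ] StrongDual ℝ Y),
        IsOpen U ∧ (0 : StrongDual ℝ X) ∈ U ∧ ∀ f ∈ U, φ f ∈ F f := by
  rintro ⟨U, φ, hU, h0, hsel⟩
  -- φ 0 = 0
  have hφ0 : φ 0 = 0 := by
    have := hsel 0 h0
    rw [hF] at this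
    have hnorm : ‖φ 0‖ = 0 := this.2.trans (norm_zero (E := StrongDual ℝ X))
    exact norm_eq_zero.mp hnorm
  -- φ agrees with its linear part
  have hlin : ∀ f, φ f = φ.linear f := by
    intro f
    have := φ.decomp
    have h := congrFun this f
    simp only [Pi.add_apply, Function.const_apply, hφ0] at h
    simpa using h
  -- local isometry
  have hloc : ∀ f ∈ U, ‖φ.linear f‖ = ‖f‖ := by
    intro f hf
    have := hsel f hf
    rw [hF] at this
    rw [← hlin]
    exact this.2
  -- globalize by scaling
  apply hemb
  refine ⟨φ.linear, fun f => ?_⟩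
  rcases Metric.isOpen_iff.mp hU 0 h0 with ⟨r, hr, hball⟩
  set ε : ℝ := r / (2 * (‖f‖ + 1)) with hε
  have hεpos : 0 < ε := by positivity
  have hnsc := @NormedSpace.toNormSMulClass ℝ (StrongDual ℝ X) _ _ _
  have hmem : ε • f ∈ U := by
    apply hball
    simp only [Metric.mem_ball, dist_zero_right (E := StrongDual ℝ X), norm_smul, Real.norm_eq_abs,
      abs_of_pos hεpos]
    calc ε * ‖f‖ < ε * (2 * (‖f‖ + 1)) := by
          apply mul_lt_mul_of_pos_left _ hεpos
          nlinarith [norm_nonneg f]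
      _ = r := by
          rw [hε]; field_simp
  have := hloc (ε • f) hmem
  rw [map_smul, norm_smul, norm_smul, Real.norm_eq_abs, abs_of_pos hεpos] at this
  exact mul_left_cancel₀ (ne_of_gt hεpos) this
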